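/- arXiv:1601.05179 — 4 statements merged into one kernel-verified Lean document; each statement's English description precedes it below -/
import Mathlib

section
/- For all x > 0, define γ(x) = -sqrt(2(x - 1 - ln x)) if x ≤ 1 and γ(x) = +sqrt(2(x - 1 - ln x)) if x > 1. Then γ is strictly increasing on (0, ∞). -/
noncomputable def gammaSLL (x : ℝ) : ℝ :=
  if x ≤ 1 then -Real.sqrt (2 * (x - 1 - Real.log x))
  else Real.sqrt (2 * (x - 1 - Real.log x))

private lemma f_pos {x : ℝ} (hx : 0 < x) (hne : x ≠ 1) : 0 < x - 1 - Real.log x := by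
  have := Real.log_lt_sub_one_of_pos hx hne
  linarith

private lemma f_nonneg {x : ℝ} (hx : 0 < x) : 0 ≤ x - 1 - Real.log x := by
  rcases eq_or_ne x 1 with h | h
  · simp [h]
  · exact (f_pos hx h).le

private lemma f_deriv {x : ℝ} (hx : 0 < x) :
    HasDerivAt (fun y : ℝ => y - 1 - Real.log y) (1 - x⁻¹) x := by
  have h1 : HasDerivAt (fun y : ℝ => y - 1) 1 x := (hasDerivAt_id x).sub_const 1
  exact h1.sub (Real.hasDerivAt_log hx.ne')

private lemma f_cont : ContinuousOn (fun y : ℝ => y - 1 - Real.log y) (Set.Ioi 0) := by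
  apply ContinuousOn.sub
  · exact (continuous_id.sub continuous_const).continuousOn
  · exact Real.continuousOn_log.mono (fun x hx => ne_of_gt hx)

private lemma f_anti : StrictAntiOn (fun y : ℝ => y - 1 - Real.log y) (Set.Ioc 0 1) := by
  apply strictAntiOn_of_deriv_neg (convex_Ioc 0 1)
    (f_cont.mono (fun x hx => hx.1))
  intro x hx
  rw [interior_Ioc] at hx
  rw [(f_deriv hx.1).deriv]
  have : 1 < x⁻¹ := (one_lt_inv_iff₀).2 ⟨hx.1, hx.2⟩
  linarith

private lemma f_mono : StrictMonoOn (fun y : ℝ => y - 1 - Real.log y) (Set.Ici 1) := by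
  apply strictMonoOn_of_deriv_pos (convex_Ici 1)
    (f_cont.mono (fun x hx => Set.mem_Ioi.2 (lt_of_lt_of_le one_pos (Set.mem_Ici.1 hx))))
  intro x hx
  rw [interior_Ici] at hx
  have hx0 : (0:ℝ) < x := lt_trans one_pos hx
  rw [(f_deriv hx0).deriv]
  have : x⁻¹ < 1 := inv_lt_one_of_one_lt₀ hx
  linarith

theorem gammaSLL_strictMonoOn : StrictMonoOn gammaSLL (Set.Ioi (0 : ℝ)) := by
  intro x hx y hy hxy
  simp only [Set.mem_Ioi] at hx hy
  unfold gammaSLL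
  by_cases hy1 : y ≤ 1
  · -- then x < y ≤ 1
    have hx1 : x ≤ 1 := le_of_lt (lt_of_lt_of_le hxy hy1)
    rw [if_pos hx1, if_pos hy1]
    have hfx : y - 1 - Real.log y < x - 1 - Real.log x :=
      f_anti ⟨hx, hx1⟩ ⟨hy, hy1⟩ hxy
    have : Real.sqrt (2 * (y - 1 - Real.log y)) < Real.sqrt (2 * (x - 1 - Real.log x)) := by
      apply Real.sqrt_lt_sqrt
      · nlinarith [f_nonneg hy]
      · nlinarith
    linarith
  · push_neg at hy1
    rw [if_neg (not_le.2 hy1)]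
    have hyp : 0 < Real.sqrt (2 * (y - 1 - Real.log y)) :=
      Real.sqrt_pos.2 (by nlinarith [f_pos hy hy1.ne'])
    by_cases hx1 : x ≤ 1
    · rw [if_pos hx1]
      have : 0 ≤ Real.sqrt (2 * (x - 1 - Real.log x)) := Real.sqrt_nonneg _
      linarith
    · push_neg at hx1
      rw [if_neg (not_le.2 hx1)]
      apply Real.sqrt_lt_sqrt
      · nlinarith [f_nonneg hx]
      · have := f_mono (Set.mem_Ici.2 hx1.le) (Set.mem_Ici.2 hy1.le) hxy
        simp only at this
        nlinarith
end

section
/- For all x > 0 with x ≠ 1, the function x ↦ γ(x)/(x-1) is strictly decreasing on (0,∞)\{1}, where γ(x) = sign(x-1)·sqrt(2(x - 1 - ln x)). -/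
noncomputable def gFun (x : ℝ) : ℝ := 2 * (x - 1 - Real.log x) / (x - 1) ^ 2

noncomputable def qFun (x : ℝ) : ℝ := -x + x⁻¹ + 2 * Real.log x

noncomputable def pFun (x : ℝ) : ℝ := -x ^ 2 + 4 * x - 3 - 2 * Real.log x

lemma qFun_hasDerivAt {x : ℝ} (hx : 0 < x) :
    HasDerivAt qFun (-(x - 1) ^ 2 / x ^ 2) x := by
  have h : HasDerivAt qFun _ x := (((hasDerivAt_id x).neg.add (hasDerivAt_inv hx.ne')).add
    ((Real.hasDerivAt_log hx.ne').const_mul 2))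
  convert h using 1
  field_simp
  ring

lemma pFun_hasDerivAt {x : ℝ} (hx : 0 < x) :
    HasDerivAt pFun (-2 * (x - 1) ^ 2 / x) x := by
  have h : HasDerivAt pFun _ x := ((((hasDerivAt_pow 2 x).neg.add ((hasDerivAt_id x).const_mul 4)).sub
    (hasDerivAt_const x 3)).sub ((Real.hasDerivAt_log hx.ne').const_mul 2))
  convert h using 1
  field_simp
  ring

lemma qFun_anti_lo : StrictAntiOn qFun (Set.Ioc (0 : ℝ) 1) := by
  apply strictAntiOn_of_deriv_neg (convex_Ioc 0 1)
  · exact fun z hz => ((qFun_hasDerivAt hz.1).continuousAt).continuousWithinAt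
  · intro z hz
    rw [interior_Ioc] at hz
    rw [(qFun_hasDerivAt hz.1).deriv]
    have hsq : 0 < (z - 1) ^ 2 := by nlinarith [mul_pos (sub_pos.2 hz.2) (sub_pos.2 hz.2)]
    have hz2 : 0 < z ^ 2 := pow_pos hz.1 2
    exact div_neg_of_neg_of_pos (by linarith) hz2

lemma qFun_anti_hi : StrictAntiOn qFun (Set.Ici (1 : ℝ)) := by
  apply strictAntiOn_of_deriv_neg (convex_Ici 1)
  · exact fun z hz => ((qFun_hasDerivAt (by linarith [Set.mem_Ici.1 hz])).continuousAt).continuousWithinAt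
  · intro z hz
    rw [interior_Ici] at hz
    have hz1 : (1:ℝ) < z := hz
    rw [(qFun_hasDerivAt (by linarith)).deriv]
    have hsq : 0 < (z - 1) ^ 2 := by nlinarith
    have hz2 : 0 < z ^ 2 := by positivity
    exact div_neg_of_neg_of_pos (by linarith) hz2

lemma pFun_anti_lo : StrictAntiOn pFun (Set.Ioc (0 : ℝ) 1) := by
  apply strictAntiOn_of_deriv_neg (convex_Ioc 0 1)
  · exact fun z hz => ((pFun_hasDerivAt hz.1).continuousAt).continuousWithinAt
  · intro z hz
    rw [interior_Ioc] at hz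
    rw [(pFun_hasDerivAt hz.1).deriv]
    have hsq : 0 < (z - 1) ^ 2 := by nlinarith [mul_pos (sub_pos.2 hz.2) (sub_pos.2 hz.2)]
    exact div_neg_of_neg_of_pos (by linarith) hz.1

lemma pFun_anti_hi : StrictAntiOn pFun (Set.Ici (1 : ℝ)) := by
  apply strictAntiOn_of_deriv_neg (convex_Ici 1)
  · exact fun z hz => ((pFun_hasDerivAt (by linarith [Set.mem_Ici.1 hz])).continuousAt).continuousWithinAt
  · intro z hz
    rw [interior_Ici] at hz
    have hz1 : (1:ℝ) < z := hz
    rw [(pFun_hasDerivAt (by linarith)).deriv]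
    have hsq : 0 < (z - 1) ^ 2 := by nlinarith
    exact div_neg_of_neg_of_pos (by linarith) (by linarith)

lemma qFun_pos {x : ℝ} (h0 : 0 < x) (h1 : x < 1) : 0 < qFun x := by
  have h := qFun_anti_lo ⟨h0, h1.le⟩ ⟨one_pos, le_refl 1⟩ h1
  simp only [qFun, Real.log_one] at h ⊢
  linarith

lemma qFun_neg {x : ℝ} (h1 : 1 < x) : qFun x < 0 := by
  have h := qFun_anti_hi (Set.mem_Ici.2 le_rfl) (Set.mem_Ici.2 h1.le) h1
  simp only [qFun, Real.log_one] at h ⊢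
  linarith

lemma pFun_pos {x : ℝ} (h0 : 0 < x) (h1 : x < 1) : 0 < pFun x := by
  have h := pFun_anti_lo ⟨h0, h1.le⟩ ⟨one_pos, le_refl 1⟩ h1
  simp only [pFun, Real.log_one] at h ⊢
  linarith

lemma pFun_neg {x : ℝ} (h1 : 1 < x) : pFun x < 0 := by
  have h := pFun_anti_hi (Set.mem_Ici.2 le_rfl) (Set.mem_Ici.2 h1.le) h1
  simp only [pFun, Real.log_one] at h ⊢
  linarith

lemma gFun_hasDerivAt {x : ℝ} (hx : 0 < x) (hx1 : x ≠ 1) :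
    HasDerivAt gFun (2 * qFun x / (x - 1) ^ 3) x := by
  have hnum : HasDerivAt (fun y : ℝ => 2 * (y - 1 - Real.log y)) (2 * (1 - x⁻¹)) x := by
    have := (((hasDerivAt_id x).sub (hasDerivAt_const x 1)).sub
      (Real.hasDerivAt_log hx.ne')).const_mul 2
    simpa using this
  have hden : HasDerivAt (fun y : ℝ => (y - 1) ^ 2) (2 * (x - 1)) x := by
    have := ((hasDerivAt_id x).sub (hasDerivAt_const x 1)).pow 2
    exact this.congr_deriv (by simp)
  have hd : (x - 1) ^ 2 ≠ 0 := pow_ne_zero _ (sub_ne_zero.2 hx1)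
  have h : HasDerivAt gFun _ x := hnum.div hden hd
  convert h using 1
  have hx0 : x ≠ 0 := hx.ne'
  have h1 : x - 1 ≠ 0 := sub_ne_zero.2 hx1
  rw [qFun]
  field_simp [qFun]
  ring

lemma gFun_anti_lo : StrictAntiOn gFun (Set.Ioo (0 : ℝ) 1) := by
  apply strictAntiOn_of_deriv_neg (convex_Ioo 0 1)
  · exact fun z hz => ((gFun_hasDerivAt hz.1 hz.2.ne).continuousAt).continuousWithinAt
  · intro z hz
    rw [interior_Ioo] at hz
    rw [(gFun_hasDerivAt hz.1 hz.2.ne).deriv]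
    have hq : 0 < qFun z := qFun_pos hz.1 hz.2
    have hsq : 0 < (z - 1) ^ 2 := by nlinarith [mul_pos (sub_pos.2 hz.2) (sub_pos.2 hz.2)]
    have hcube : (z - 1) ^ 3 < 0 := by
      calc (z - 1) ^ 3 = (z - 1) * (z - 1) ^ 2 := by ring
        _ < 0 := mul_neg_of_neg_of_pos (by linarith [hz.2]) hsq
    exact div_neg_of_pos_of_neg (by linarith) hcube

lemma gFun_anti_hi : StrictAntiOn gFun (Set.Ioi (1 : ℝ)) := by
  apply strictAntiOn_of_deriv_neg (convex_Ioi 1)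
  · intro z hz
    have hz1 : (1:ℝ) < z := hz
    exact ((gFun_hasDerivAt (by linarith) hz1.ne').continuousAt).continuousWithinAt
  · intro z hz
    rw [interior_Ioi] at hz
    have hz1 : (1:ℝ) < z := hz
    rw [(gFun_hasDerivAt (by linarith) hz1.ne').deriv]
    have hq : qFun z < 0 := qFun_neg hz1
    have hcube : 0 < (z - 1) ^ 3 := pow_pos (by linarith) 3
    exact div_neg_of_neg_of_pos (by linarith) hcube

lemma gFun_gt_one {x : ℝ} (h0 : 0 < x) (h1 : x < 1) : 1 < gFun x := by
  have hp := pFun_pos h0 h1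
  have hsq : (0:ℝ) < (x - 1) ^ 2 := by nlinarith [mul_pos (sub_pos.2 h1) (sub_pos.2 h1)]
  rw [gFun, lt_div_iff₀ hsq]
  simp only [pFun] at hp
  nlinarith

lemma gFun_lt_one {x : ℝ} (h1 : 1 < x) : gFun x < 1 := by
  have hp := pFun_neg h1
  have hsq : (0:ℝ) < (x - 1) ^ 2 := by nlinarith
  rw [gFun, div_lt_iff₀ hsq]
  simp only [pFun] at hp
  nlinarith

lemma gFun_nonneg {x : ℝ} (hx : 0 < x) : 0 ≤ gFun x := by
  have := Real.log_le_sub_one_of_pos hx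
  have h1 : (0:ℝ) ≤ 2 * (x - 1 - Real.log x) := by linarith
  exact div_nonneg h1 (by positivity)

lemma f_eq {z : ℝ} (hz : 0 < z) (hz1 : z ≠ 1) :
    gammaSLL z / (z - 1) = Real.sqrt (gFun z) := by
  have hle : Real.log z ≤ z - 1 := Real.log_le_sub_one_of_pos hz
  have h2 : (0:ℝ) ≤ 2 * (z - 1 - Real.log z) := by linarith
  have hs : Real.sqrt (gFun z)
      = Real.sqrt (2 * (z - 1 - Real.log z)) / |z - 1| := by
    rw [gFun, Real.sqrt_div h2, Real.sqrt_sq_eq_abs]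
  rw [hs]
  rcases lt_or_gt_of_ne hz1 with h | h
  · rw [gammaSLL, if_pos h.le, abs_of_neg (by linarith : z - 1 < 0)]
    rw [div_neg_eq_neg_div, neg_div]
  · rw [gammaSLL, if_neg (by linarith), abs_of_pos (by linarith : (0:ℝ) < z - 1)]

theorem gammaSLL_div_strictAntiOn :
    StrictAntiOn (fun x => gammaSLL x / (x - 1)) (Set.Ioi (0 : ℝ) \ {1}) := by
  intro x hx y hy hxy
  have hx0 : (0:ℝ) < x := hx.1
  have hy0 : (0:ℝ) < y := hy.1
  have hx1 : x ≠ 1 := hx.2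
  have hy1 : y ≠ 1 := hy.2
  simp only [f_eq hx0 hx1, f_eq hy0 hy1]
  refine Real.sqrt_lt_sqrt (gFun_nonneg hy0) ?_
  rcases lt_or_gt_of_ne hy1 with hylt | hygt
  · exact gFun_anti_lo ⟨hx0, hxy.trans hylt⟩ ⟨hy0, hylt⟩ hxy
  · rcases lt_or_gt_of_ne hx1 with hxlt | hxgt
    · exact (gFun_lt_one hygt).trans (gFun_gt_one hx0 hxlt)
    · exact gFun_anti_hi (Set.mem_Ioi.2 hxgt) (Set.mem_Ioi.2 hygt) hxy
end

section
/- Let X have the exponential distribution with mean θ and let G(x) = γ(x/θ) where γ(x) = sign(x-1)·sqrt(2(x-1-ln x)). Then G(X) is stochastically dominated by a standard Gaussian random variable; equivalently, Φ(γ(x/θ)) ≤ 1 - exp(-x/θ) for all x > 0. -/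
open MeasureTheory

noncomputable def stdGaussianCDF (t : ℝ) : ℝ :=
  ∫ x in Set.Iic t, Real.exp (-x ^ 2 / 2) / Real.sqrt (2 * Real.pi)

open Set Real Filter Topology


noncomputable def phi (x : ℝ) : ℝ := Real.exp (-x ^ 2 / 2) / Real.sqrt (2 * Real.pi)

lemma phi_eq (x : ℝ) : phi x = Real.exp (-(1/2) * x ^ 2) * (Real.sqrt (2 * Real.pi))⁻¹ := by
  rw [phi]; ring_nf

lemma integrable_phi : Integrable phi := by
  simp only [funext phi_eq]
  exact (integrable_exp_neg_mul_sq (by norm_num)).mul_const _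

lemma continuous_phi : Continuous phi := by
  unfold phi; continuity

lemma phi_nonneg (x : ℝ) : 0 ≤ phi x := by
  unfold phi; positivity

lemma integral_phi : ∫ x, phi x = 1 := by
  simp only [funext phi_eq]
  rw [integral_mul_const, integral_gaussian]
  rw [show Real.pi / (1/2) = 2 * Real.pi by ring]
  rw [mul_inv_cancel₀ (by positivity)]

lemma cdf_eq (t : ℝ) : stdGaussianCDF t = ∫ x in Set.Iic t, phi x := rfl

lemma cdf_mono : Monotone stdGaussianCDF := by
  intro a b hab
  rw [cdf_eq, cdf_eq]
  exact setIntegral_mono_set integrable_phi.integrableOn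
    (Filter.Eventually.of_forall phi_nonneg) (HasSubset.Subset.eventuallyLE (Iic_subset_Iic.2 hab))

lemma cdf_nonneg (t : ℝ) : 0 ≤ stdGaussianCDF t :=
  setIntegral_nonneg measurableSet_Iic fun x _ => phi_nonneg x

lemma cdf_sub (a b : ℝ) : stdGaussianCDF b - stdGaussianCDF a = ∫ x in a..b, phi x := by
  rw [cdf_eq, cdf_eq]
  exact intervalIntegral.integral_Iic_sub_Iic integrable_phi.integrableOn integrable_phi.integrableOn

lemma cdf_hasDerivAt (t : ℝ) : HasDerivAt stdGaussianCDF (phi t) t := by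
  have : ∀ s, stdGaussianCDF s = stdGaussianCDF 0 + ∫ x in (0:ℝ)..s, phi x := by
    intro s; rw [← cdf_sub]; ring
  rw [funext this]
  exact ((intervalIntegral.integral_hasDerivAt_right
    integrable_phi.intervalIntegrable
    (continuous_phi.stronglyMeasurableAtFilter _ _)
    continuous_phi.continuousAt).const_add _)

lemma cdf_add_tail (t : ℝ) : stdGaussianCDF t + ∫ x in Set.Ioi t, phi x = 1 := by
  rw [cdf_eq, intervalIntegral.integral_Iic_add_Ioi integrable_phi.integrableOn integrable_phi.integrableOn,
    integral_phi]

lemma cdf_le_one (t : ℝ) : stdGaussianCDF t ≤ 1 := by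
  have := cdf_add_tail t
  nlinarith [setIntegral_nonneg (μ := volume) (measurableSet_Ioi (a := t)) fun x _ => phi_nonneg x]

lemma cdf_tendsto_atTop : Tendsto stdGaussianCDF atTop (𝓝 1) := by
  have h := tendsto_setIntegral_of_monotone (μ := volume) (f := phi) (s := fun t : ℝ => Iic t)
    (fun i => measurableSet_Iic) (fun a b hab => Iic_subset_Iic.2 hab) ?_
  · rw [Set.iUnion_Iic] at h
    simp only [setIntegral_univ, integral_phi] at h
    exact h
  · rw [Set.iUnion_Iic]; exact integrable_phi.integrableOn

lemma cdf_tendsto_atBot : Tendsto stdGaussianCDF atBot (𝓝 0) := by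
  have h := tendsto_setIntegral_of_antitone (μ := volume) (f := phi)
    (s := fun t : ℝ => Iic (-t)) (fun i => measurableSet_Iic)
    (fun a b hab => Iic_subset_Iic.2 (by linarith)) ⟨0, integrable_phi.integrableOn⟩
  have hi : ⋂ t : ℝ, Iic (-t) = ∅ := by
    ext y; simp only [mem_iInter, mem_Iic, mem_empty_iff_false, iff_false, not_forall]
    exact ⟨-(y - 1), by simp⟩
  rw [hi] at h
  simp only [setIntegral_empty] at h
  have : Tendsto (fun t : ℝ => stdGaussianCDF (-t)) atTop (𝓝 0) := h
  have h2 := this.comp (tendsto_neg_atBot_atTop)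
  have : ((fun t : ℝ => stdGaussianCDF (-t)) ∘ Neg.neg) = stdGaussianCDF := by
    funext t; simp
  rwa [this] at h2

lemma cdf_zero : stdGaussianCDF 0 = 1/2 := by
  have h1 : stdGaussianCDF 0 + ∫ x in Set.Ioi (0:ℝ), phi x = 1 := cdf_add_tail 0
  have h2 : ∫ x in Set.Ioi (0:ℝ), phi x = stdGaussianCDF 0 := by
    have he : ∀ x : ℝ, phi (-x) = phi x := by intro x; unfold phi; ring_nf
    have := integral_comp_neg_Iic (0:ℝ) phi
    rw [funext he, neg_zero] at this
    rw [cdf_eq, this]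
  linarith

noncomputable def ell (u : ℝ) : ℝ := 2 * (u - 1 - Real.log u)

lemma ell_hasDerivAt {u : ℝ} (hu : 0 < u) : HasDerivAt ell (2 * (1 - u⁻¹)) u := by
  have h := ((hasDerivAt_id u).sub_const 1).sub (Real.hasDerivAt_log hu.ne')
  have h2 := h.const_mul (2:ℝ)
  exact h2

lemma ell_nonneg {u : ℝ} (hu : 0 < u) : 0 ≤ ell u := by
  have := Real.log_le_sub_one_of_pos hu
  unfold ell; linarith

lemma ell_pos {u : ℝ} (hu : 0 < u) (h1 : u ≠ 1) : 0 < ell u := by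
  have := Real.log_lt_sub_one_of_pos hu h1
  unfold ell; linarith

lemma ell_one : ell 1 = 0 := by simp [ell]

lemma gamma_eq_neg {u : ℝ} (hu : u ≤ 1) : gammaSLL u = -Real.sqrt (ell u) := by
  simp [gammaSLL, hu, ell]

lemma gamma_eq_pos {u : ℝ} (hu : 1 ≤ u) : gammaSLL u = Real.sqrt (ell u) := by
  rcases eq_or_lt_of_le hu with h | h
  · rw [← h]; rw [gamma_eq_neg le_rfl, ell_one]; simp
  · simp [gammaSLL, not_le.2 h, ell]

lemma sq_gamma {u : ℝ} (hu : 0 < u) : (gammaSLL u) ^ 2 = ell u := by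
  rcases le_or_gt u 1 with h | h
  · rw [gamma_eq_neg h, neg_pow, Real.sq_sqrt (ell_nonneg hu)]; ring
  · rw [gamma_eq_pos h.le, Real.sq_sqrt (ell_nonneg hu)]

lemma phi_gamma {u : ℝ} (hu : 0 < u) :
    phi (gammaSLL u) = u * Real.exp (1 - u) / Real.sqrt (2 * Real.pi) := by
  unfold phi
  rw [sq_gamma hu]
  congr 1
  have : -ell u / 2 = Real.log u + (1 - u) := by unfold ell; ring
  rw [this, Real.exp_add, Real.exp_log hu]

lemma gamma_hasDerivAt_gt {u : ℝ} (hu : 1 < u) :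
    HasDerivAt gammaSLL ((1 - u⁻¹) / Real.sqrt (ell u)) u := by
  have h0 : 0 < u := by linarith
  have hl : ell u ≠ 0 := (ell_pos h0 hu.ne').ne'
  have hsq : HasDerivAt (fun v => Real.sqrt (ell v))
      (2 * (1 - u⁻¹) / (2 * Real.sqrt (ell u))) u := by
    have := (Real.hasDerivAt_sqrt hl).comp u (ell_hasDerivAt h0)
    refine this.congr_deriv ?_
    field_simp
  have heq : (fun v => Real.sqrt (ell v)) =ᶠ[nhds u] gammaSLL := by
    filter_upwards [eventually_gt_nhds hu] with v hv
    rw [gamma_eq_pos hv.le]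
  have := hsq.congr_of_eventuallyEq heq.symm
  refine this.congr_deriv ?_
  have : Real.sqrt (ell u) ≠ 0 := Real.sqrt_ne_zero'.2 (ell_pos h0 hu.ne')
  field_simp

lemma gamma_hasDerivAt_lt {u : ℝ} (h0 : 0 < u) (hu : u < 1) :
    HasDerivAt gammaSLL ((u⁻¹ - 1) / Real.sqrt (ell u)) u := by
  have hl : ell u ≠ 0 := (ell_pos h0 hu.ne).ne'
  have hsq : HasDerivAt (fun v => -Real.sqrt (ell v))
      (-(2 * (1 - u⁻¹) / (2 * Real.sqrt (ell u)))) u := by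
    have := ((Real.hasDerivAt_sqrt hl).comp u (ell_hasDerivAt h0)).neg
    refine this.congr_deriv ?_
    field_simp
  have heq : (fun v => -Real.sqrt (ell v)) =ᶠ[nhds u] gammaSLL := by
    filter_upwards [eventually_lt_nhds hu] with v hv
    rw [gamma_eq_neg hv.le]
  have := hsq.congr_of_eventuallyEq heq.symm
  refine this.congr_deriv ?_
  have : Real.sqrt (ell u) ≠ 0 := Real.sqrt_ne_zero'.2 (ell_pos h0 hu.ne)
  field_simp
  ring

lemma contOn_gamma_Ici : ContinuousOn gammaSLL (Ici 1) := by
  have : ContinuousOn (fun v => Real.sqrt (ell v)) (Ici 1) := by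
    apply Real.continuous_sqrt.comp_continuousOn
    apply ContinuousOn.mul continuousOn_const
    exact (continuousOn_id.sub continuousOn_const).sub
      (Real.continuousOn_log.mono (fun x hx => by
        simp only [mem_compl_iff, mem_singleton_iff]
        intro h; rw [h] at hx; exact absurd hx (by norm_num)))
  exact this.congr fun v hv => gamma_eq_pos hv

lemma contOn_gamma_Ioc : ContinuousOn gammaSLL (Ioc 0 1) := by
  have : ContinuousOn (fun v => -Real.sqrt (ell v)) (Ioc 0 1) := by
    apply ContinuousOn.neg
    apply Real.continuous_sqrt.comp_continuousOn
    apply ContinuousOn.mul continuousOn_const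
    exact (continuousOn_id.sub continuousOn_const).sub
      (Real.continuousOn_log.mono (fun x hx => by
        simp only [mem_compl_iff, mem_singleton_iff]
        exact fun h => by rw [h] at hx; exact absurd hx.1 (by norm_num)))
  exact this.congr fun v hv => gamma_eq_neg hv.2


-- log u ≥ (u-1) - (u-1)^2/2 for u ≥ 1
lemma log_ge_quad {u : ℝ} (hu : 1 ≤ u) : (u - 1) - (u - 1) ^ 2 / 2 ≤ Real.log u := by
  set g : ℝ → ℝ := fun v => Real.log v - (v - 1) + (v - 1) ^ 2 / 2 with hg
  have key : MonotoneOn g (Ici 1) := by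
    apply monotoneOn_of_deriv_nonneg (convex_Ici 1)
    · apply ContinuousOn.add
      apply ContinuousOn.sub
      · exact Real.continuousOn_log.mono (fun x hx => by
          simp only [mem_compl_iff, mem_singleton_iff]
          intro h; rw [h] at hx; exact absurd hx (by norm_num [mem_Ici]))
      · fun_prop
      · fun_prop
    · intro x hx
      rw [interior_Ici] at hx
      have h0 : (0:ℝ) < x := by have := hx.out; norm_num at this ⊢; linarith
      exact (((Real.hasDerivAt_log h0.ne').sub ((hasDerivAt_id x).sub_const 1)).add
        ((((hasDerivAt_id x).sub_const 1).pow 2).div_const 2)).differentiableAt.differentiableWithinAt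
    · intro x hx
      rw [interior_Ici] at hx
      have h1 : (1:ℝ) < x := hx
      have h0 : (0:ℝ) < x := by linarith
      have hd : HasDerivAt g (x⁻¹ - 1 + ↑2 * (x - 1) ^ (2 - 1) * 1 / 2) x := by
        have := ((Real.hasDerivAt_log h0.ne').sub ((hasDerivAt_id x).sub_const 1)).add
          ((((hasDerivAt_id x).sub_const 1).pow 2).div_const 2)
        simp at this; refine this.congr_deriv ?_; norm_num
      rw [hd.deriv]
      have hxx : x * x⁻¹ = 1 := mul_inv_cancel₀ h0.ne'
      norm_num
      nlinarith [sq_nonneg (x-1), sq_nonneg (x⁻¹ - 1)]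
  have := key (self_mem_Ici) hu hu
  simp only [hg] at this
  norm_num at this
  nlinarith [this]

-- log u ≤ 2(u-1)/(u+1) for 0 < u ≤ 1
lemma log_le_pade {u : ℝ} (h0 : 0 < u) (h1 : u ≤ 1) : Real.log u ≤ 2 * (u - 1) / (u + 1) := by
  set g : ℝ → ℝ := fun v => 2 * (v - 1) / (v + 1) - Real.log v with hg
  have hasd : ∀ x ∈ Ioo (0:ℝ) 1, HasDerivAt g (4 / (x+1)^2 - x⁻¹) x := by
    intro x hx
    have hx0 : (0:ℝ) < x := hx.1
    have hq : HasDerivAt (fun v : ℝ => 2 * (v - 1) / (v + 1)) (4 / (x+1)^2) x := by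
      have h1' : HasDerivAt (fun v : ℝ => 2 * (v - 1)) 2 x := by
        simpa using ((hasDerivAt_id x).sub_const 1).const_mul 2
      have h2' : HasDerivAt (fun v : ℝ => v + 1) 1 x := (hasDerivAt_id x).add_const 1
      have := h1'.div h2' (by positivity)
      refine this.congr_deriv ?_
      field_simp
      ring
    exact hq.sub (Real.hasDerivAt_log hx0.ne')
  have key : AntitoneOn g (Ioc 0 1) := by
    apply antitoneOn_of_deriv_nonpos (convex_Ioc 0 1)
    · apply ContinuousOn.sub
      · apply ContinuousOn.div (by fun_prop) (by fun_prop)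
        intro x hx; have := hx.1; positivity
      · exact Real.continuousOn_log.mono (fun x hx => by
          simp only [mem_compl_iff, mem_singleton_iff]
          exact fun h => by rw [h] at hx; exact absurd hx.1 (by norm_num))
    · intro x hx
      rw [interior_Ioc] at hx
      exact (hasd x hx).differentiableAt.differentiableWithinAt
    · intro x hx
      rw [interior_Ioc] at hx
      rw [(hasd x hx).deriv]
      have hx0 : (0:ℝ) < x := hx.1
      rw [div_sub' (by positivity : ((x:ℝ)+1)^2 ≠ 0)]
      apply div_nonpos_of_nonpos_of_nonneg _ (by positivity)
      have : 4 - (x+1)^2 * x⁻¹ = -((x-1)^2) * x⁻¹ := by field_simp; ring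
      rw [this]
      have : (0:ℝ) ≤ (x-1)^2 * x⁻¹ := by positivity
      linarith
  have := key (mem_Ioc.2 ⟨h0, h1⟩) (mem_Ioc.2 ⟨zero_lt_one, le_rfl⟩) h1
  simp only [hg] at this
  norm_num at this
  linarith [this]

-- numeric facts
lemma two_pi_le_e_sq : 2 * Real.pi ≤ Real.exp 1 ^ 2 := by
  nlinarith [Real.exp_one_gt_d9, Real.pi_lt_d2]

lemma four_pi_ge : Real.exp 1 ^ 2 * (1 + 0.695) ≤ 4 * Real.pi := by
  have he : Real.exp 1 < 2.7182818286 := Real.exp_one_lt_d9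
  have hp : 3.141592 < Real.pi := Real.pi_gt_d6
  nlinarith [Real.exp_pos 1, he, hp]

lemma sqrt_ineq_ge_one {u : ℝ} (hu : 1 ≤ u) :
    Real.sqrt (2 * Real.pi) * Real.sqrt (ell u) ≤ Real.exp 1 * (u - 1) := by
  have h0 : (0:ℝ) < u := lt_of_lt_of_le one_pos hu
  have h1 : ell u ≤ (u - 1) ^ 2 := by
    have := log_ge_quad hu
    unfold ell; nlinarith
  have h2 : 2 * Real.pi * ell u ≤ (Real.exp 1 * (u - 1)) ^ 2 := by
    have hl : 0 ≤ ell u := ell_nonneg h0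
    have hpi : (0:ℝ) < 2 * Real.pi := by positivity
    calc 2 * Real.pi * ell u ≤ Real.exp 1 ^ 2 * ell u := by
          nlinarith [two_pi_le_e_sq]
      _ ≤ Real.exp 1 ^ 2 * (u-1)^2 := by nlinarith [Real.exp_pos 1]
      _ = (Real.exp 1 * (u-1))^2 := by ring
  calc Real.sqrt (2 * Real.pi) * Real.sqrt (ell u)
      = Real.sqrt (2 * Real.pi * ell u) := (Real.sqrt_mul (by positivity) _).symm
    _ ≤ Real.sqrt ((Real.exp 1 * (u - 1)) ^ 2) := Real.sqrt_le_sqrt h2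
    _ = Real.exp 1 * (u - 1) := Real.sqrt_sq (by nlinarith [Real.exp_pos 1])

lemma sqrt_ineq_le_c {u : ℝ} (h0 : 0 < u) (hc : u ≤ 0.695) :
    Real.exp 1 * (1 - u) ≤ Real.sqrt (2 * Real.pi) * Real.sqrt (ell u) := by
  have h1' : u ≤ 1 := by linarith
  have hpade := log_le_pade h0 h1'
  have hu1 : (0:ℝ) < 1 + u := by linarith
  have h1 : (1 - u) ^ 2 / (1 + u) * 2 ≤ ell u := by
    rw [div_mul_eq_mul_div, div_le_iff₀ hu1]
    unfold ell
    rw [le_div_iff₀ (show (0:ℝ) < u + 1 by linarith)] at hpade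
    nlinarith [hpade]
  have h2 : (Real.exp 1 * (1 - u)) ^ 2 ≤ 2 * Real.pi * ell u := by
    have hfp : Real.exp 1 ^ 2 ≤ 4 * Real.pi / (1 + u) := by
      rw [le_div_iff₀ hu1]
      nlinarith [four_pi_ge, Real.exp_pos 1, sq_nonneg (Real.exp 1)]
    have hsq : (0:ℝ) ≤ (1-u)^2 := sq_nonneg _
    have := ell_nonneg h0
    calc (Real.exp 1 * (1 - u)) ^ 2 = Real.exp 1 ^ 2 * (1-u)^2 := by ring
      _ ≤ (4 * Real.pi / (1 + u)) * (1-u)^2 := by nlinarith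
      _ = 2 * Real.pi * ((1 - u) ^ 2 / (1 + u) * 2) := by field_simp; ring
      _ ≤ 2 * Real.pi * ell u := by nlinarith [Real.pi_pos, h1]
  calc Real.exp 1 * (1 - u) = Real.sqrt ((Real.exp 1 * (1 - u)) ^ 2) :=
        (Real.sqrt_sq (by nlinarith [Real.exp_pos 1])).symm
    _ ≤ Real.sqrt (2 * Real.pi * ell u) := Real.sqrt_le_sqrt h2
    _ = Real.sqrt (2 * Real.pi) * Real.sqrt (ell u) := Real.sqrt_mul (by positivity) _

noncomputable def A (u : ℝ) : ℝ := 1 - Real.exp (-u) - stdGaussianCDF (gammaSLL u)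

lemma exp_neg_hasDerivAt (u : ℝ) :
    HasDerivAt (fun v : ℝ => Real.exp (-v)) (-Real.exp (-u)) u := by
  have := (Real.hasDerivAt_exp (-u)).comp u (hasDerivAt_neg u)
  simp at this
  exact this

lemma cdf_continuous : Continuous stdGaussianCDF := by
  have h : Differentiable ℝ stdGaussianCDF := fun t => (cdf_hasDerivAt t).differentiableAt
  exact h.continuous

lemma A_hasDerivAt_gt {u : ℝ} (hu : 1 < u) :
    HasDerivAt A (Real.exp (-u) - phi (gammaSLL u) * ((1 - u⁻¹) / Real.sqrt (ell u))) u := by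
  have hg := gamma_hasDerivAt_gt hu
  have hc := (cdf_hasDerivAt (gammaSLL u)).comp u hg
  have he := exp_neg_hasDerivAt u
  have := ((hasDerivAt_const u (1:ℝ)).sub he).sub hc
  refine this.congr_deriv ?_
  ring

lemma A_hasDerivAt_lt {u : ℝ} (h0 : 0 < u) (hu : u < 1) :
    HasDerivAt A (Real.exp (-u) - phi (gammaSLL u) * ((u⁻¹ - 1) / Real.sqrt (ell u))) u := by
  have hg := gamma_hasDerivAt_lt h0 hu
  have hc := (cdf_hasDerivAt (gammaSLL u)).comp u hg
  have he := exp_neg_hasDerivAt u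
  have := ((hasDerivAt_const u (1:ℝ)).sub he).sub hc
  refine this.congr_deriv ?_
  ring

lemma derivA_nonpos {u : ℝ} (hu : 1 < u) :
    Real.exp (-u) - phi (gammaSLL u) * ((1 - u⁻¹) / Real.sqrt (ell u)) ≤ 0 := by
  have h0 : 0 < u := lt_trans one_pos hu
  have hs : 0 < Real.sqrt (ell u) := Real.sqrt_pos.2 (ell_pos h0 hu.ne')
  have hsp : 0 < Real.sqrt (2 * Real.pi) := Real.sqrt_pos.2 (by positivity)
  rw [sub_nonpos, phi_gamma h0]
  have hrw : u * Real.exp (1 - u) / Real.sqrt (2 * Real.pi) * ((1 - u⁻¹) / Real.sqrt (ell u))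
      = Real.exp (-u) * (Real.exp 1 * (u - 1)) / (Real.sqrt (2 * Real.pi) * Real.sqrt (ell u)) := by
    rw [show (1:ℝ) - u = 1 + -u by ring, Real.exp_add]
    field_simp
  rw [hrw, le_div_iff₀ (by positivity)]
  have key := sqrt_ineq_ge_one hu.le
  nlinarith [Real.exp_pos (-u), key]

lemma derivA_nonneg {u : ℝ} (h0 : 0 < u) (hc : u ≤ 0.695) :
    0 ≤ Real.exp (-u) - phi (gammaSLL u) * ((u⁻¹ - 1) / Real.sqrt (ell u)) := by
  have hu1 : u < 1 := by linarith
  have hs : 0 < Real.sqrt (ell u) := Real.sqrt_pos.2 (ell_pos h0 hu1.ne)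
  have hsp : 0 < Real.sqrt (2 * Real.pi) := Real.sqrt_pos.2 (by positivity)
  rw [sub_nonneg, phi_gamma h0]
  have hrw : u * Real.exp (1 - u) / Real.sqrt (2 * Real.pi) * ((u⁻¹ - 1) / Real.sqrt (ell u))
      = Real.exp (-u) * (Real.exp 1 * (1 - u)) / (Real.sqrt (2 * Real.pi) * Real.sqrt (ell u)) := by
    rw [show (1:ℝ) - u = 1 + -u by ring, Real.exp_add]
    field_simp
    ring
  rw [hrw, div_le_iff₀ (by positivity)]
  have key := sqrt_ineq_le_c h0 hc
  nlinarith [Real.exp_pos (-u), key]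

lemma contA_Ici : ContinuousOn A (Ici 1) := by
  apply ContinuousOn.sub
  · exact (continuous_const.sub (Real.continuous_exp.comp continuous_neg)).continuousOn
  · exact cdf_continuous.comp_continuousOn contOn_gamma_Ici

lemma contA_Ioc : ContinuousOn A (Ioc 0 0.695) := by
  apply ContinuousOn.sub
  · exact (continuous_const.sub (Real.continuous_exp.comp continuous_neg)).continuousOn
  · exact cdf_continuous.comp_continuousOn (contOn_gamma_Ioc.mono
      (fun x hx => ⟨hx.1, by have := hx.2; norm_num at this ⊢; linarith⟩))

lemma A_antitone : AntitoneOn A (Ici 1) := by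
  apply antitoneOn_of_deriv_nonpos (convex_Ici 1) contA_Ici
  · intro x hx
    rw [interior_Ici] at hx
    exact (A_hasDerivAt_gt hx).differentiableAt.differentiableWithinAt
  · intro x hx
    rw [interior_Ici] at hx
    rw [(A_hasDerivAt_gt hx).deriv]
    exact derivA_nonpos hx

lemma A_monotone : MonotoneOn A (Ioc 0 0.695) := by
  apply monotoneOn_of_deriv_nonneg (convex_Ioc 0 0.695) contA_Ioc
  · intro x hx
    rw [interior_Ioc] at hx
    have hx1 : x < 1 := by have := hx.2; norm_num at this ⊢; linarith
    exact (A_hasDerivAt_lt hx.1 hx1).differentiableAt.differentiableWithinAt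
  · intro x hx
    rw [interior_Ioc] at hx
    have hx1 : x < 1 := by have := hx.2; norm_num at this ⊢; linarith
    rw [(A_hasDerivAt_lt hx.1 hx1).deriv]
    exact derivA_nonneg hx.1 hx.2.le

lemma sqrt_tendsto_atTop : Tendsto Real.sqrt atTop atTop := by
  refine tendsto_atTop_atTop.2 fun b => ⟨b ^ 2, fun a ha => ?_⟩
  calc b ≤ |b| := le_abs_self b
    _ = Real.sqrt (b ^ 2) := (Real.sqrt_sq_eq_abs b).symm
    _ ≤ Real.sqrt a := Real.sqrt_le_sqrt ha

lemma ell_tendsto_atTop : Tendsto ell atTop atTop := by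
  apply tendsto_atTop_mono' atTop (f₁ := fun u : ℝ => u - 2)
  · filter_upwards [eventually_ge_atTop (1:ℝ)] with u hu
    have h0 : (0:ℝ) < u := by linarith
    have h2 : Real.log (u / 2) = Real.log u - Real.log 2 :=
      Real.log_div h0.ne' (by norm_num)
    have hlog : Real.log u ≤ u / 2 - 1 + Real.log 2 := by
      have := Real.log_le_sub_one_of_pos (show (0:ℝ) < u / 2 by linarith)
      linarith
    have hlog2 : Real.log 2 ≤ 1 := by
      nlinarith [Real.log_two_lt_d9]
    unfold ell
    nlinarith
  · exact tendsto_atTop_add_const_right _ (-2) tendsto_id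

lemma gamma_tendsto_atTop : Tendsto gammaSLL atTop atTop := by
  have h := sqrt_tendsto_atTop.comp ell_tendsto_atTop
  apply h.congr'
  filter_upwards [eventually_ge_atTop (1:ℝ)] with u hu
  exact (gamma_eq_pos hu).symm

lemma A_tendsto_atTop : Tendsto A atTop (𝓝 0) := by
  have h1 : Tendsto (fun u : ℝ => 1 - Real.exp (-u)) atTop (𝓝 1) := by
    have h := Real.tendsto_exp_neg_atTop_nhds_zero.const_sub (1:ℝ)
    simpa using h
  have h2 : Tendsto (fun u => stdGaussianCDF (gammaSLL u)) atTop (𝓝 1) :=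
    cdf_tendsto_atTop.comp gamma_tendsto_atTop
  have := h1.sub h2
  simp at this
  exact this

lemma gamma_tendsto_zero_right : Tendsto gammaSLL (𝓝[>] (0:ℝ)) atBot := by
  have hell : Tendsto ell (𝓝[>] (0:ℝ)) atTop := by
    have h1 : Tendsto (fun u : ℝ => -Real.log u) (𝓝[>] (0:ℝ)) atTop :=
      tendsto_neg_atBot_atTop.comp Real.tendsto_log_nhdsGT_zero
    have h2 : Tendsto (fun u : ℝ => u - 1) (𝓝[>] (0:ℝ)) (𝓝 (-1)) := by
      have h : Tendsto (fun u : ℝ => u - 1) (𝓝 (0:ℝ)) (𝓝 ((0:ℝ) - 1)) :=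
        (continuous_id.sub continuous_const).tendsto 0
      norm_num at h
      exact h.mono_left nhdsWithin_le_nhds
    have h3 : Tendsto (fun u : ℝ => (u - 1) + -Real.log u) (𝓝[>] (0:ℝ)) atTop :=
      h2.add_atTop h1
    have h4 : Tendsto (fun u : ℝ => 2 * ((u - 1) + -Real.log u)) (𝓝[>] (0:ℝ)) atTop :=
      h3.const_mul_atTop two_pos
    apply h4.congr
    intro u; unfold ell; ring
  have h := tendsto_neg_atTop_atBot.comp (sqrt_tendsto_atTop.comp hell)
  apply h.congr'
  filter_upwards [Ioc_mem_nhdsGT_of_mem (by norm_num : (0:ℝ) ∈ Ico (0:ℝ) 1)] with u hu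
  exact (gamma_eq_neg hu.2).symm

lemma A_tendsto_zero_right : Tendsto A (𝓝[>] (0:ℝ)) (𝓝 0) := by
  have h1 : Tendsto (fun u : ℝ => 1 - Real.exp (-u)) (𝓝[>] (0:ℝ)) (𝓝 0) := by
    have h : Tendsto (fun u : ℝ => 1 - Real.exp (-u)) (𝓝 (0:ℝ))
        (𝓝 (1 - Real.exp (-(0:ℝ)))) :=
      (continuous_const.sub (Real.continuous_exp.comp continuous_neg)).tendsto 0
    norm_num at h
    exact h.mono_left nhdsWithin_le_nhds
  have h2 : Tendsto (fun u => stdGaussianCDF (gammaSLL u)) (𝓝[>] (0:ℝ)) (𝓝 0) :=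
    cdf_tendsto_atBot.comp gamma_tendsto_zero_right
  have := h1.sub h2
  simp at this
  exact this

lemma A_nonneg {u : ℝ} (hu : 0 < u) : 0 ≤ A u := by
  rcases le_or_gt u 0.695 with hc | hc
  · -- monotone case
    refine le_of_tendsto A_tendsto_zero_right ?_
    filter_upwards [Ioc_mem_nhdsGT_of_mem (show (0:ℝ) ∈ Ico (0:ℝ) u from ⟨le_rfl, hu⟩)] with v hv
    exact A_monotone ⟨hv.1, le_trans hv.2 hc⟩ ⟨hu, hc⟩ hv.2
  rcases le_or_gt u 1 with h1 | h1
  · -- middle case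
    have hg : gammaSLL u ≤ 0 := by
      rw [gamma_eq_neg h1]
      exact neg_nonpos.2 (Real.sqrt_nonneg _)
    have hcdf : stdGaussianCDF (gammaSLL u) ≤ 1/2 := by
      have := cdf_mono hg
      rwa [cdf_zero] at this
    have hexp : Real.exp (-u) ≤ 1/2 := by
      have hlt : Real.log 2 ≤ u := by nlinarith [Real.log_two_lt_d9]
      calc Real.exp (-u) ≤ Real.exp (-Real.log 2) := Real.exp_le_exp.2 (by linarith)
        _ = 1/2 := by rw [Real.exp_neg, Real.exp_log two_pos]; norm_num
    unfold A
    linarith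
  · -- antitone case
    refine le_of_tendsto A_tendsto_atTop ?_
    filter_upwards [eventually_ge_atTop u] with v hv
    exact A_antitone (mem_Ici.2 h1.le) (mem_Ici.2 (le_trans h1.le hv)) hv

theorem exponential_sll_dominated (θ x : ℝ) (hθ : 0 < θ) (hx : 0 < x) :
    stdGaussianCDF (gammaSLL (x / θ)) ≤ 1 - Real.exp (-x / θ) := by
  have hu : 0 < x / θ := div_pos hx hθ
  have h := A_nonneg hu
  unfold A at h
  rw [neg_div]
  linarith
end

section
/- The saddle-point approximation is exact for the exponential family of exponential distributions: for X ~ Exp^θ with density f, one has f(x) = (sqrt(2π)/e)·φ(γ(x/θ))/x for all x > 0, where φ is the standard Gaussian density and γ(x) = sign(x-1)·sqrt(2(x-1-ln x)). -/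
noncomputable def stdGaussianPDF (z : ℝ) : ℝ :=
  Real.exp (-z ^ 2 / 2) / Real.sqrt (2 * Real.pi)

theorem exponential_saddlepoint_exact (θ x : ℝ) (hθ : 0 < θ) (hx : 0 < x) :
    Real.exp (-x / θ) / θ =
      Real.sqrt (2 * Real.pi) / Real.exp 1 * stdGaussianPDF (gammaSLL (x / θ)) / x := by
  set y := x / θ with hy
  have hy0 : 0 < y := div_pos hx hθ
  have hnn : 0 ≤ 2 * (y - 1 - Real.log y) := by
    have := Real.log_le_sub_one_of_pos hy0
    linarith
  have hsq : (gammaSLL y) ^ 2 = 2 * (y - 1 - Real.log y) := by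
    unfold gammaSLL
    split
    · rw [neg_sq]; exact Real.sq_sqrt hnn
    · exact Real.sq_sqrt hnn
  have h2pi : (0:ℝ) < Real.sqrt (2 * Real.pi) :=
    Real.sqrt_pos.mpr (by positivity)
  rw [stdGaussianPDF, hsq]
  have hexp : Real.exp (-(2 * (y - 1 - Real.log y)) / 2) = Real.exp 1 * y * Real.exp (-y) := by
    rw [show Real.exp 1 * y * Real.exp (-y) = Real.exp 1 * Real.exp (Real.log y) * Real.exp (-y) by
      rw [Real.exp_log hy0]]
    rw [← Real.exp_add, ← Real.exp_add]
    ring_nf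
  rw [hexp]
  have hθ' := hθ.ne'
  have hx' := hx.ne'
  have he := (Real.exp_pos 1).ne'
  field_simp
  rw [hy]
  field_simp
end
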